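/- For q an odd prime power, the product of all a ∈ F_q^× such that a+1 is a nonsquare in F_q equals (-1)^((q-1)/2) · 2, and this set has cardinality (q-1)/2. -/

import Mathlib

open scoped Classical

open Polynomial Finset in
private lemma nonsquare_facts (F : Type*) [Field F] [Fintype F] (q : ℕ)
    (hq : Fintype.card F = q) (hodd : Odd q) :
    (∏ b ∈ Finset.univ.filter (fun b : F => ¬ IsSquare b), (1 - b)) = 2 ∧
    (Finset.univ.filter (fun b : F => ¬ IsSquare b)).card = (q - 1) / 2 := by
  have hchar : ringChar F ≠ 2 := by
    intro h
    have := FiniteField.even_card_of_char_two h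
    rw [hq] at this
    rw [Nat.odd_iff] at hodd
    omega
  obtain ⟨k, hk⟩ := hodd
  have hq2 : 2 ≤ q := by rw [← hq]; exact Fintype.one_lt_card
  have hm : (q - 1) / 2 = q / 2 := by omega
  set m := q / 2 with hmdef
  have hm0 : m ≠ 0 := by omega
  set N := Finset.univ.filter (fun b : F => ¬ IsSquare b) with hN
  set Sq := Finset.univ.filter (fun b : F => b ≠ 0 ∧ IsSquare b) with hSq
  -- nonsquares satisfy b ^ m = -1
  have hNpow : ∀ b ∈ N, b ^ m = -1 := by
    intro b hb
    rw [hN, Finset.mem_filter] at hb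
    have hb0 : b ≠ 0 := by rintro rfl; exact hb.2 ⟨0, by ring⟩
    have := FiniteField.pow_dichotomy hchar hb0
    rw [hq] at this
    rcases this with h | h
    · exact absurd ((FiniteField.isSquare_iff hchar hb0).2 (by rw [hq]; exact h)) hb.2
    · exact h
  have hSqpow : ∀ b ∈ Sq, b ^ m = 1 := by
    intro b hb
    rw [hSq, Finset.mem_filter] at hb
    have := (FiniteField.isSquare_iff hchar hb.2.1).1 hb.2.2
    rw [hq] at this; exact this
  -- polynomial Q = X^m + 1 has all of N as roots
  set Q : F[X] := X ^ m + C 1 with hQdef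
  have hQmonic : Q.Monic := monic_X_pow_add_C _ hm0
  have hQ0 : Q ≠ 0 := hQmonic.ne_zero
  have hQdeg : Q.natDegree = m := natDegree_X_pow_add_C
  have hNroots : N.val ⊆ Q.roots := by
    intro b hb
    rw [mem_roots hQ0]
    simp only [hQdef, IsRoot, eval_add, eval_pow, eval_X, eval_C]
    rw [hNpow b hb]; ring
  have hNcard : N.card ≤ m := hQdeg ▸ card_le_degree_of_subset_roots hNroots
  have hSqcard : Sq.card ≤ m := by
    have h : Sq.val ⊆ (X ^ m - C 1 : F[X]).roots := by
      intro b hb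
      rw [mem_roots (monic_X_pow_sub_C (1:F) hm0).ne_zero]
      simp only [IsRoot, eval_sub, eval_pow, eval_X, eval_C]
      rw [hSqpow b hb]; ring
    have := card_le_degree_of_subset_roots h
    rwa [natDegree_X_pow_sub_C] at this
  -- counting
  have hcount : N.card + Sq.card + 1 = q := by
    have h1 : (Finset.univ.filter (fun b : F => IsSquare b)).card
        + N.card = q := by
      rw [hN, Finset.card_filter_add_card_filter_not, Finset.card_univ, hq]
    have h2 : (Finset.univ.filter (fun b : F => IsSquare b)).card = Sq.card + 1 := by
      have h3 : Finset.univ.filter (fun b : F => IsSquare b)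
          = insert (0:F) Sq := by
        ext b
        simp only [hSq, Finset.mem_filter, Finset.mem_univ, true_and, Finset.mem_insert]
        constructor
        · intro hb
          by_cases hb0 : b = 0
          · exact Or.inl hb0
          · exact Or.inr ⟨hb0, hb⟩
        · rintro (rfl | ⟨_, hb⟩)
          · exact ⟨0, by ring⟩
          · exact hb
      rw [h3, Finset.card_insert_of_notMem]
      simp [hSq]
    omega
  have hNcardm : N.card = m := by omega
  -- N.val = Q.roots
  have hroots : N.val = Q.roots := by
    refine Multiset.eq_of_le_of_card_le ((Finset.val_le_iff_val_subset).2 hNroots) ?_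
    have := Polynomial.card_roots' Q
    rw [hQdeg] at this
    calc Multiset.card Q.roots ≤ m := this
    _ = Multiset.card N.val := by rw [← hNcardm]; rfl
  -- Q splits, equals product of roots
  have hsplits : Q.Splits := by
    rw [splits_iff_card_roots, ← hroots, hQdeg]
    exact hNcardm
  have hQeq := hsplits.eq_prod_roots_of_monic hQmonic
  -- evaluate at 1
  have heval : (2 : F) = ∏ b ∈ N, (1 - b) := by
    have := congrArg (eval 1) hQeq
    rw [hQdef] at this
    simp only [eval_add, eval_pow, eval_X, eval_C, one_pow] at this
    rw [← hroots] at this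
    rw [show (2:F) = 1 + 1 by norm_num, this, eval_multiset_prod, Multiset.map_map,
      Finset.prod]
    apply congrArg Multiset.prod
    apply Multiset.map_congr rfl
    intro b _
    simp
  exact ⟨heval.symm, by rw [hm]; exact hNcardm⟩

/-- The product of all `a ∈ F_q^×` with `a+1` a nonsquare is `(-1)^((q-1)/2)·2`,
and there are `(q-1)/2` such elements. -/
theorem prod_S1_minus (F : Type*) [Field F] [Fintype F] (q : ℕ)
    (hq : Fintype.card F = q) (hodd : Odd q) :
    (∏ a ∈ Finset.univ.filter (fun a : F => a ≠ 0 ∧ a + 1 ≠ 0 ∧ ¬ IsSquare (a + 1)), a)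
      = (-1 : F) ^ ((q - 1) / 2) * 2 ∧
    (Finset.univ.filter (fun a : F => a ≠ 0 ∧ a + 1 ≠ 0 ∧ ¬ IsSquare (a + 1))).card
      = (q - 1) / 2 := by
  obtain ⟨hprod, hcard⟩ := nonsquare_facts F q hq hodd
  set N := Finset.univ.filter (fun b : F => ¬ IsSquare b) with hN
  have hinj : Function.Injective (fun b : F => b - 1) := fun a b h => by
    simpa using sub_left_injective h
  have himg : Finset.univ.filter
      (fun a : F => a ≠ 0 ∧ a + 1 ≠ 0 ∧ ¬ IsSquare (a + 1))
      = N.image (fun b => b - 1) := by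
    ext a
    simp only [Finset.mem_filter, Finset.mem_univ, true_and, Finset.mem_image, hN]
    constructor
    · rintro ⟨ha0, ha1, hns⟩
      exact ⟨a + 1, hns, by ring⟩
    · rintro ⟨b, hns, rfl⟩
      have hb0 : b ≠ 0 := by rintro rfl; exact hns ⟨0, by ring⟩
      have hb1 : b ≠ 1 := by rintro rfl; exact hns ⟨1, by ring⟩
      refine ⟨by simpa using sub_ne_zero_of_ne hb1, by simpa, by simpa⟩
  constructor
  · rw [himg, Finset.prod_image (fun a _ b _ h => hinj h)]
    have : ∀ b ∈ N, b - 1 = (-1) * (1 - b) := fun b _ => by ring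
    rw [Finset.prod_congr rfl this, Finset.prod_mul_distrib, Finset.prod_const,
      hcard, hprod]
  · rw [himg, Finset.card_image_of_injective _ hinj, hcard]
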